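/- (Existence of the representation η'₁.) For every n ≥ 2 and every t, v ∈ ℂ with v ≠ 0, there exists a group homomorphism ρ : VST_n → GL_n(ℂ) such that for all 1 ≤ i ≤ n−1: ρ(s_i) = L_i(!![1−t, t; 2−t, t−1]), ρ(τ_i) = I_n (the n×n identity matrix), and ρ(ν_i) = L_i(!![0, v; v⁻¹, 0]). (In particular these matrices are invertible and satisfy all the defining relations of VST_n.) -/

import Mathlib

/-- Generator type for the virtual singular twin group `VST_n`:
three copies of `Fin (n-1)`, for the generators `s_i`, `τ_i`, `ν_i`. -/
abbrev VSTGen (n : ℕ) := Fin (n - 1) ⊕ Fin (n - 1) ⊕ Fin (n - 1)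

def vstS (n : ℕ) (i : Fin (n - 1)) : FreeGroup (VSTGen n) := FreeGroup.of (Sum.inl i)
def vstT (n : ℕ) (i : Fin (n - 1)) : FreeGroup (VSTGen n) := FreeGroup.of (Sum.inr (Sum.inl i))
def vstN (n : ℕ) (i : Fin (n - 1)) : FreeGroup (VSTGen n) := FreeGroup.of (Sum.inr (Sum.inr i))

def vstAdj {n : ℕ} (i j : Fin (n - 1)) : Prop := i.val + 1 = j.val ∨ j.val + 1 = i.val
def vstFar {n : ℕ} (i j : Fin (n - 1)) : Prop := i.val + 2 ≤ j.val ∨ j.val + 2 ≤ i.val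

/-- The defining relations of the virtual singular twin group `VST_n`. -/
def vstRels (n : ℕ) : Set (FreeGroup (VSTGen n)) :=
  {r | (∃ i, r = vstS n i * vstS n i) ∨
       (∃ i, r = vstN n i * vstN n i) ∨
       (∃ i, r = vstT n i * vstS n i * (vstS n i * vstT n i)⁻¹) ∨
       (∃ i j, vstAdj i j ∧
          r = vstS n i * vstS n j * vstT n i * (vstT n j * vstS n i * vstS n j)⁻¹) ∨
       (∃ i j, vstAdj i j ∧
          r = vstN n i * vstN n j * vstN n i * (vstN n j * vstN n i * vstN n j)⁻¹) ∨
       (∃ i j, vstAdj i j ∧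
          r = vstN n i * vstS n j * vstN n i * (vstN n j * vstS n i * vstN n j)⁻¹) ∨
       (∃ i j, vstAdj i j ∧
          r = vstN n i * vstT n j * vstN n i * (vstN n j * vstT n i * vstN n j)⁻¹) ∨
       (∃ i j, vstFar i j ∧
          ∃ g ∈ ({vstS n, vstT n, vstN n} : Set (Fin (n - 1) → FreeGroup (VSTGen n))),
          ∃ h ∈ ({vstS n, vstT n, vstN n} : Set (Fin (n - 1) → FreeGroup (VSTGen n))),
            r = g i * h j * (h j * g i)⁻¹)}

/-- The virtual singular twin group `VST_n`. -/
abbrev VST (n : ℕ) := PresentedGroup (vstRels n)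

/-- `Lmat n i M` is the `n × n` matrix agreeing with the identity outside rows and
columns `i, i+1` (0-indexed), with `2 × 2` block `M` there. -/
def Lmat {R : Type*} [Zero R] [One R] (n : ℕ) (i : ℕ) (M : Matrix (Fin 2) (Fin 2) R) :
    Matrix (Fin n) (Fin n) R :=
  Matrix.of fun a b =>
    if a.val = i ∧ b.val = i then M 0 0
    else if a.val = i ∧ b.val = i + 1 then M 0 1
    else if a.val = i + 1 ∧ b.val = i then M 1 0
    else if a.val = i + 1 ∧ b.val = i + 1 then M 1 1
    else if a.val = b.val then 1 else 0

/-! ### Auxiliary lemmas -/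

lemma Lmat_one (n i : ℕ) : Lmat n i (1 : Matrix (Fin 2) (Fin 2) ℂ) = 1 := by
  ext a b
  simp only [Lmat, Matrix.of_apply, Matrix.one_apply, Fin.ext_iff]
  split_ifs <;> simp_all <;> omega

lemma mul_Lmat_apply (n i : ℕ) (hi : i + 1 < n) (M : Matrix (Fin 2) (Fin 2) ℂ)
    (A : Matrix (Fin n) (Fin n) ℂ) (a b : Fin n) :
    (A * Lmat n i M) a b =
      if b.val = i then A a ⟨i, by omega⟩ * M 0 0 + A a ⟨i+1, hi⟩ * M 1 0
      else if b.val = i + 1 then A a ⟨i, by omega⟩ * M 0 1 + A a ⟨i+1, hi⟩ * M 1 1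
      else A a b := by
  rw [Matrix.mul_apply]
  by_cases hb : b.val = i
  · rw [if_pos hb, Fintype.sum_eq_add (⟨i, by omega⟩ : Fin n) ⟨i+1, hi⟩
      (by simp [Fin.ext_iff]) ?_]
    · simp [Lmat, hb]
    · intro x ⟨hx1, hx2⟩
      simp only [ne_eq, Fin.ext_iff] at hx1 hx2
      have h0 : Lmat n i M x b = 0 := by
        simp only [Lmat, Matrix.of_apply]
        split_ifs <;> first | rfl | (exfalso; omega)
      rw [h0, mul_zero]
  · by_cases hb' : b.val = i + 1
    · rw [if_neg hb, if_pos hb', Fintype.sum_eq_add (⟨i, by omega⟩ : Fin n) ⟨i+1, hi⟩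
        (by simp [Fin.ext_iff]) ?_]
      · simp [Lmat, hb']
      · intro x ⟨hx1, hx2⟩
        simp only [ne_eq, Fin.ext_iff] at hx1 hx2
        have h0 : Lmat n i M x b = 0 := by
          simp only [Lmat, Matrix.of_apply]
          split_ifs <;> first | rfl | (exfalso; omega)
        rw [h0, mul_zero]
    · rw [if_neg hb, if_neg hb', Fintype.sum_eq_single b ?_]
      · simp [Lmat, hb, hb']
      · intro x hx
        simp only [ne_eq, Fin.ext_iff] at hx
        have h0 : Lmat n i M x b = 0 := by
          simp only [Lmat, Matrix.of_apply]
          split_ifs <;> first | rfl | (exfalso; omega)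
        rw [h0, mul_zero]

lemma Lmat_mul (n i : ℕ) (hi : i + 1 < n) (M M' : Matrix (Fin 2) (Fin 2) ℂ) :
    Lmat n i M * Lmat n i M' = Lmat n i (M * M') := by
  ext a b
  rw [mul_Lmat_apply n i hi]
  rcases (by omega : (b:ℕ) = i ∨ (b:ℕ) = i+1 ∨ (¬(b:ℕ) = i ∧ ¬(b:ℕ) = i+1)) with
    hb | hb | ⟨hb1, hb2⟩ <;>
  rcases (by omega : (a:ℕ) = i ∨ (a:ℕ) = i+1 ∨ (¬(a:ℕ) = i ∧ ¬(a:ℕ) = i+1)) with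
    ha | ha | ⟨ha1, ha2⟩ <;>
    simp [Lmat, Matrix.mul_apply, Fin.sum_univ_two, *]

lemma Lmat_comm (n i j : ℕ) (hi : i + 1 < n) (hj : j + 1 < n) (hij : i + 2 ≤ j)
    (M M' : Matrix (Fin 2) (Fin 2) ℂ) :
    Lmat n i M * Lmat n j M' = Lmat n j M' * Lmat n i M := by
  ext a b
  rw [mul_Lmat_apply n j hj, mul_Lmat_apply n i hi]
  rcases (by omega : (b:ℕ) = i ∨ (b:ℕ) = i+1 ∨ (b:ℕ) = j ∨ (b:ℕ) = j+1 ∨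
      (¬(b:ℕ) = i ∧ ¬(b:ℕ) = i+1 ∧ ¬(b:ℕ) = j ∧ ¬(b:ℕ) = j+1)) with
    hb | hb | hb | hb | ⟨hb1, hb2, hb3, hb4⟩ <;>
  rcases (by omega : (a:ℕ) = i ∨ (a:ℕ) = i+1 ∨ (a:ℕ) = j ∨ (a:ℕ) = j+1 ∨
      (¬(a:ℕ) = i ∧ ¬(a:ℕ) = i+1 ∧ ¬(a:ℕ) = j ∧ ¬(a:ℕ) = j+1)) with
    ha | ha | ha | ha | ⟨ha1, ha2, ha3, ha4⟩ <;>
    simp [Lmat, (show ¬ i = j by omega), (show ¬ i + 1 = j by omega),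
      (show ¬ i = j + 1 by omega), (show ¬ i + 1 = j + 1 by omega), (show ¬ j = i by omega),
      (show ¬ j + 1 = i by omega), (show ¬ j = i + 1 by omega),
      (show ¬ j + 1 = i + 1 by omega), *]

/-- 3×3 window version of `Lmat`. -/
def Wmat (n i : ℕ) (X : Matrix (Fin 3) (Fin 3) ℂ) : Matrix (Fin n) (Fin n) ℂ :=
  Matrix.of fun a b =>
    if h : i ≤ a.val ∧ a.val < i + 3 ∧ i ≤ b.val ∧ b.val < i + 3 then
      X ⟨a.val - i, by omega⟩ ⟨b.val - i, by omega⟩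
    else if a.val = b.val then 1 else 0

lemma fin3_mk2 (h : 2 < 3) : (⟨2, h⟩ : Fin 3) = 2 := rfl

lemma mul_Wmat_apply (n i : ℕ) (h : i + 2 < n) (X : Matrix (Fin 3) (Fin 3) ℂ)
    (A : Matrix (Fin n) (Fin n) ℂ) (a b : Fin n) :
    (A * Wmat n i X) a b =
      if hb : i ≤ b.val ∧ b.val < i + 3 then
        A a ⟨i, by omega⟩ * X 0 ⟨b.val - i, by omega⟩
        + A a ⟨i+1, by omega⟩ * X 1 ⟨b.val - i, by omega⟩
        + A a ⟨i+2, by omega⟩ * X 2 ⟨b.val - i, by omega⟩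
      else A a b := by
  rw [Matrix.mul_apply]
  by_cases hb : i ≤ b.val ∧ b.val < i + 3
  · rw [dif_pos hb]
    rw [show (Finset.univ : Finset (Fin n)) =
        insert ⟨i, by omega⟩ (insert ⟨i+1, by omega⟩ ({⟨i+2, by omega⟩} : Finset (Fin n))) ∪
          (Finset.univ \ insert ⟨i, by omega⟩
            (insert ⟨i+1, by omega⟩ ({⟨i+2, by omega⟩} : Finset (Fin n)))) by
      rw [Finset.union_sdiff_of_subset (Finset.subset_univ _)]]
    rw [Finset.sum_union (Finset.disjoint_sdiff)]
    rw [Finset.sum_insert (by simp [Fin.ext_iff]), Finset.sum_insert (by simp [Fin.ext_iff]),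
      Finset.sum_singleton]
    have hz : ∑ x ∈ Finset.univ \ insert (⟨i, by omega⟩ : Fin n)
        (insert ⟨i+1, by omega⟩ ({⟨i+2, by omega⟩} : Finset (Fin n))),
        A a x * Wmat n i X x b = 0 := by
      apply Finset.sum_eq_zero
      intro x hx
      simp only [Finset.mem_sdiff, Finset.mem_insert, Finset.mem_singleton, not_or,
        Fin.ext_iff] at hx
      have h0 : Wmat n i X x b = 0 := by
        simp only [Wmat, Matrix.of_apply]
        rw [dif_neg (by omega), if_neg (by omega)]
      rw [h0, mul_zero]
    rw [hz, add_zero]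
    have e0 : Wmat n i X ⟨i, by omega⟩ b = X 0 ⟨b.val - i, by omega⟩ := by
      simp only [Wmat, Matrix.of_apply]
      rw [dif_pos (by omega)]
      congr 1
      simp [Fin.ext_iff]
    have e1 : Wmat n i X ⟨i+1, by omega⟩ b = X 1 ⟨b.val - i, by omega⟩ := by
      simp only [Wmat, Matrix.of_apply]
      rw [dif_pos (by omega)]
      congr 1
      simp [Fin.ext_iff]
    have e2 : Wmat n i X ⟨i+2, by omega⟩ b = X 2 ⟨b.val - i, by omega⟩ := by
      simp only [Wmat, Matrix.of_apply]
      rw [dif_pos (by omega)]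
      congr 1
      simp [Fin.ext_iff]
    rw [e0, e1, e2, add_assoc]
  · rw [dif_neg hb, Fintype.sum_eq_single b]
    · have : Wmat n i X b b = 1 := by
        simp only [Wmat, Matrix.of_apply]
        rw [dif_neg (by omega)]
        simp
      rw [this, mul_one]
    · intro x hx
      simp only [ne_eq, Fin.ext_iff] at hx
      have h0 : Wmat n i X x b = 0 := by
        simp only [Wmat, Matrix.of_apply]
        rw [dif_neg (by omega), if_neg (by omega)]
      rw [h0, mul_zero]

lemma Wmat_mul (n i : ℕ) (h : i + 2 < n) (X Y : Matrix (Fin 3) (Fin 3) ℂ) :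
    Wmat n i X * Wmat n i Y = Wmat n i (X * Y) := by
  ext a b
  rw [mul_Wmat_apply n i h]
  by_cases hb : i ≤ b.val ∧ b.val < i + 3
  · rw [dif_pos hb]
    by_cases ha : i ≤ a.val ∧ a.val < i + 3
    · simp only [Wmat, Matrix.of_apply]
      rw [dif_pos (by omega), dif_pos (by omega), dif_pos (by omega), dif_pos (by omega)]
      rw [Matrix.mul_apply, Fin.sum_univ_three]
      congr 2 <;> simp [Fin.ext_iff] <;> omega
    · simp only [Wmat, Matrix.of_apply]
      rw [dif_neg (by omega), dif_neg (by omega), dif_neg (by omega), dif_neg (by omega),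
        if_neg (by omega), if_neg (by omega), if_neg (by omega), if_neg (by omega)]
      ring
  · rw [dif_neg hb]
    simp only [Wmat, Matrix.of_apply]
    rw [dif_neg (by omega), dif_neg (by omega)]

lemma Lmat_eq_W0 (n i : ℕ) (h : i + 2 < n) (M : Matrix (Fin 2) (Fin 2) ℂ) :
    Lmat n i M = Wmat n i (Lmat 3 0 M) := by
  ext a b
  simp only [Lmat, Wmat, Matrix.of_apply]
  rcases (by omega : (b:ℕ) = i ∨ (b:ℕ) = i+1 ∨ (b:ℕ) = i+2 ∨
      (¬(b:ℕ) = i ∧ ¬(b:ℕ) = i+1 ∧ ¬(b:ℕ) = i+2)) with hb | hb | hb | ⟨hb1, hb2, hb3⟩ <;>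
  rcases (by omega : (a:ℕ) = i ∨ (a:ℕ) = i+1 ∨ (a:ℕ) = i+2 ∨
      (¬(a:ℕ) = i ∧ ¬(a:ℕ) = i+1 ∧ ¬(a:ℕ) = i+2)) with ha | ha | ha | ⟨ha1, ha2, ha3⟩ <;>
    simp [Lmat, Nat.add_sub_cancel_left, fin3_mk2,
      (show ¬ i+1 = i by omega), (show ¬ i+2 = i by omega), (show ¬ i+2 = i+1 by omega),
      (show ¬ i = i+1 by omega), (show ¬ i = i+2 by omega), (show ¬ i+1 = i+2 by omega), *] <;>
    first
      | rfl
      | (rw [if_neg (show ¬(i ≤ (a:ℕ) ∧ (a:ℕ) < i + 3) by omega)]; try simp [*])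
      | (rw [if_neg (show ¬(i ≤ (b:ℕ) ∧ (b:ℕ) < i + 3) by omega)]; try simp [*])
      | (rw [dif_neg (show ¬(i ≤ (a:ℕ) ∧ (a:ℕ) < i + 3 ∧ i ≤ (b:ℕ) ∧ (b:ℕ) < i + 3) by omega)])
        | (intros; exfalso; omega)

lemma Lmat_eq_W1 (n i : ℕ) (h : i + 2 < n) (M : Matrix (Fin 2) (Fin 2) ℂ) :
    Lmat n (i+1) M = Wmat n i (Lmat 3 1 M) := by
  ext a b
  simp only [Lmat, Wmat, Matrix.of_apply]
  rcases (by omega : (b:ℕ) = i ∨ (b:ℕ) = i+1 ∨ (b:ℕ) = i+2 ∨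
      (¬(b:ℕ) = i ∧ ¬(b:ℕ) = i+1 ∧ ¬(b:ℕ) = i+2)) with hb | hb | hb | ⟨hb1, hb2, hb3⟩ <;>
  rcases (by omega : (a:ℕ) = i ∨ (a:ℕ) = i+1 ∨ (a:ℕ) = i+2 ∨
      (¬(a:ℕ) = i ∧ ¬(a:ℕ) = i+1 ∧ ¬(a:ℕ) = i+2)) with ha | ha | ha | ⟨ha1, ha2, ha3⟩ <;>
    simp [Lmat, Nat.add_sub_cancel_left, fin3_mk2,
      (show ¬ i+1 = i by omega), (show ¬ i+2 = i by omega), (show ¬ i+2 = i+1 by omega),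
      (show ¬ i = i+1 by omega), (show ¬ i = i+2 by omega), (show ¬ i+1 = i+2 by omega), *] <;>
    first
      | rfl
      | (rw [if_neg (show ¬(i ≤ (a:ℕ) ∧ (a:ℕ) < i + 3) by omega)]; try simp [*])
      | (rw [if_neg (show ¬(i ≤ (b:ℕ) ∧ (b:ℕ) < i + 3) by omega)]; try simp [*])
      | (rw [dif_neg (show ¬(i ≤ (a:ℕ) ∧ (a:ℕ) < i + 3 ∧ i ≤ (b:ℕ) ∧ (b:ℕ) < i + 3) by omega)])
        | (intros; exfalso; omega)

lemma braid3N (v : ℂ) (hv : v ≠ 0) :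
    Lmat 3 0 !![0, v; v⁻¹, 0] * Lmat 3 1 !![0, v; v⁻¹, 0] * Lmat 3 0 !![0, v; v⁻¹, 0]
      = Lmat 3 1 !![0, v; v⁻¹, 0] * Lmat 3 0 !![0, v; v⁻¹, 0] * Lmat 3 1 !![0, v; v⁻¹, 0] := by
  have hvv : v * v⁻¹ = 1 := mul_inv_cancel₀ hv
  have hvv' : v⁻¹ * v = 1 := inv_mul_cancel₀ hv
  ext a b
  fin_cases a <;> fin_cases b <;>
    simp [Lmat, Matrix.mul_apply, Fin.sum_univ_three, hvv, hvv'] <;> ring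

lemma braid3NS (t v : ℂ) (hv : v ≠ 0) :
    Lmat 3 0 !![0, v; v⁻¹, 0] * Lmat 3 1 !![1 - t, t; 2 - t, t - 1] * Lmat 3 0 !![0, v; v⁻¹, 0]
      = Lmat 3 1 !![0, v; v⁻¹, 0] * Lmat 3 0 !![1 - t, t; 2 - t, t - 1]
        * Lmat 3 1 !![0, v; v⁻¹, 0] := by
  have hvv : v * v⁻¹ = 1 := mul_inv_cancel₀ hv
  have hvv' : v⁻¹ * v = 1 := inv_mul_cancel₀ hv
  ext a b
  fin_cases a <;> fin_cases b <;>
    simp [Lmat, Matrix.mul_apply, Fin.sum_univ_three, hvv, hvv'] <;>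
    (try ring1) <;> (try field_simp) <;> (try ring1)

lemma braidN_gen (n i : ℕ) (h : i + 2 < n) (v : ℂ) (hv : v ≠ 0) :
    Lmat n i !![0, v; v⁻¹, 0] * Lmat n (i+1) !![0, v; v⁻¹, 0] * Lmat n i !![0, v; v⁻¹, 0]
      = Lmat n (i+1) !![0, v; v⁻¹, 0] * Lmat n i !![0, v; v⁻¹, 0]
        * Lmat n (i+1) !![0, v; v⁻¹, 0] := by
  rw [Lmat_eq_W0 n i h, Lmat_eq_W1 n i h, Wmat_mul n i h, Wmat_mul n i h, Wmat_mul n i h,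
    Wmat_mul n i h]
  exact congrArg _ (braid3N v hv)

lemma braidNS_gen (n i : ℕ) (h : i + 2 < n) (t v : ℂ) (hv : v ≠ 0) :
    Lmat n i !![0, v; v⁻¹, 0] * Lmat n (i+1) !![1 - t, t; 2 - t, t - 1]
        * Lmat n i !![0, v; v⁻¹, 0]
      = Lmat n (i+1) !![0, v; v⁻¹, 0] * Lmat n i !![1 - t, t; 2 - t, t - 1]
        * Lmat n (i+1) !![0, v; v⁻¹, 0] := by
  rw [Lmat_eq_W0 n i h !![0, v; v⁻¹, 0], Lmat_eq_W0 n i h !![1 - t, t; 2 - t, t - 1],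
    Lmat_eq_W1 n i h !![0, v; v⁻¹, 0], Lmat_eq_W1 n i h !![1 - t, t; 2 - t, t - 1],
    Wmat_mul n i h, Wmat_mul n i h, Wmat_mul n i h, Wmat_mul n i h]
  exact congrArg _ (braid3NS t v hv)

lemma Ms_sq (t : ℂ) :
    !![1 - t, t; 2 - t, t - 1] * !![1 - t, t; 2 - t, t - 1] = 1 := by
  ext a b
  fin_cases a <;> fin_cases b <;>
    simp [Matrix.mul_apply, Fin.sum_univ_two, Matrix.one_apply] <;> ring

lemma Nm_sq (v : ℂ) (hv : v ≠ 0) :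
    !![0, v; v⁻¹, 0] * !![0, v; v⁻¹, 0] = 1 := by
  have hvv : v * v⁻¹ = 1 := mul_inv_cancel₀ hv
  have hvv' : v⁻¹ * v = 1 := inv_mul_cancel₀ hv
  ext a b
  fin_cases a <;> fin_cases b <;>
    simp [Matrix.mul_apply, Fin.sum_univ_two, Matrix.one_apply, hvv, hvv']

lemma LS_sq (n : ℕ) (t : ℂ) (i : ℕ) (h : i + 1 < n) :
    Lmat n i !![1 - t, t; 2 - t, t - 1] * Lmat n i !![1 - t, t; 2 - t, t - 1] = 1 := by
  rw [Lmat_mul n i h, Ms_sq, Lmat_one]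

lemma LN_sq (n : ℕ) (v : ℂ) (hv : v ≠ 0) (i : ℕ) (h : i + 1 < n) :
    Lmat n i !![0, v; v⁻¹, 0] * Lmat n i !![0, v; v⁻¹, 0] = 1 := by
  rw [Lmat_mul n i h, Nm_sq v hv, Lmat_one]

/-- Existence of the representation `η'₁` of `VST_n`:
`s_i ↦ L_i(!![1-t, t; 2-t, t-1])`, `τ_i ↦ I_n`, `ν_i ↦ L_i(!![0, v; v⁻¹, 0])`. -/
theorem exists_eta1_prime_representation (n : ℕ) (hn : 2 ≤ n) (t v : ℂ) (hv : v ≠ 0) :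
    ∃ ρ : VST n →* Matrix.GeneralLinearGroup (Fin n) ℂ,
      ∀ i : Fin (n - 1),
        ((ρ (PresentedGroup.of (Sum.inl i)) : Matrix (Fin n) (Fin n) ℂ))
          = Lmat n i.val !![1 - t, t; 2 - t, t - 1] ∧
        ((ρ (PresentedGroup.of (Sum.inr (Sum.inl i))) : Matrix (Fin n) (Fin n) ℂ)) = 1 ∧
        ((ρ (PresentedGroup.of (Sum.inr (Sum.inr i))) : Matrix (Fin n) (Fin n) ℂ))
          = Lmat n i.val !![0, v; v⁻¹, 0] := by
  classical
  have key : ∀ i : Fin (n - 1), (i : ℕ) + 1 < n := fun i => by have := i.isLt; omega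
  set fS : Fin (n - 1) → Matrix.GeneralLinearGroup (Fin n) ℂ := fun i =>
    ⟨Lmat n i !![1 - t, t; 2 - t, t - 1], Lmat n i !![1 - t, t; 2 - t, t - 1],
      LS_sq n t i (key i), LS_sq n t i (key i)⟩ with hfS
  set fN : Fin (n - 1) → Matrix.GeneralLinearGroup (Fin n) ℂ := fun i =>
    ⟨Lmat n i !![0, v; v⁻¹, 0], Lmat n i !![0, v; v⁻¹, 0],
      LN_sq n v hv i (key i), LN_sq n v hv i (key i)⟩ with hfN
  set f : VSTGen n → Matrix.GeneralLinearGroup (Fin n) ℂ :=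
    Sum.elim fS (Sum.elim (fun _ => 1) fN) with hf
  -- units squared
  have sqS : ∀ i : Fin (n - 1), fS i * fS i = 1 := fun i =>
    Units.ext (by simpa using LS_sq n t i (key i))
  have sqN : ∀ i : Fin (n - 1), fN i * fN i = 1 := fun i =>
    Units.ext (by simpa using LN_sq n v hv i (key i))
  have hrels : ∀ r ∈ vstRels n, FreeGroup.lift f r = 1 := by
    intro r hr
    simp only [vstRels, Set.mem_setOf_eq] at hr
    rcases hr with ⟨i, rfl⟩ | ⟨i, rfl⟩ | ⟨i, rfl⟩ | ⟨i, j, hadj, rfl⟩ | ⟨i, j, hadj, rfl⟩ |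
      ⟨i, j, hadj, rfl⟩ | ⟨i, j, hadj, rfl⟩ | ⟨i, j, hfar, g, hg, h, hh, rfl⟩
    · simpa [vstS, hf] using sqS i
    · simpa [vstN, hf] using sqN i
    · simp [vstS, vstT, hf, mul_assoc]
    · simp only [map_mul, map_inv, vstS, vstT, FreeGroup.lift_apply_of, hf, Sum.elim_inl,
        Sum.elim_inr, mul_one, one_mul]
      group
    · simp only [map_mul, map_inv, vstN, FreeGroup.lift_apply_of, hf, Sum.elim_inl, Sum.elim_inr]
      rw [mul_inv_eq_one]
      apply Units.ext
      simp only [Units.val_mul, hfN]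
      rcases hadj with hadjh | hadjh
      · have h2 : (i : ℕ) + 2 < n := by have := j.isLt; omega
        rw [← hadjh]
        exact braidN_gen n i h2 v hv
      · have h2 : (j : ℕ) + 2 < n := by have := i.isLt; omega
        rw [← hadjh]
        exact (braidN_gen n j h2 v hv).symm
    · simp only [map_mul, map_inv, vstN, vstS, FreeGroup.lift_apply_of, hf, Sum.elim_inl,
        Sum.elim_inr]
      rw [mul_inv_eq_one]
      apply Units.ext
      simp only [Units.val_mul, hfN, hfS]
      rcases hadj with hadjh | hadjh
      · have h2 : (i : ℕ) + 2 < n := by have := j.isLt; omega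
        rw [← hadjh]
        exact braidNS_gen n i h2 t v hv
      · have h2 : (j : ℕ) + 2 < n := by have := i.isLt; omega
        rw [← hadjh]
        exact (braidNS_gen n j h2 t v hv).symm
    · simp only [map_mul, map_inv, vstN, vstT, FreeGroup.lift_apply_of, hf, Sum.elim_inl,
        Sum.elim_inr, mul_one, one_mul]
      rw [mul_inv_eq_one]
      exact (sqN i).trans (sqN j).symm
    · have comm : ∀ M M' : Matrix (Fin 2) (Fin 2) ℂ,
          Lmat n i M * Lmat n j M' = Lmat n j M' * Lmat n i M := by
        intro M M'
        rcases hfar with hfarh | hfarh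
        · exact Lmat_comm n i j (key i) (key j) hfarh M M'
        · exact (Lmat_comm n j i (key j) (key i) hfarh M' M).symm
      have commSS : fS i * fS j = fS j * fS i := Units.ext (comm _ _)
      have commSN : fS i * fN j = fN j * fS i := Units.ext (comm _ _)
      have commNS : fN i * fS j = fS j * fN i := Units.ext (comm _ _)
      have commNN : fN i * fN j = fN j * fN i := Units.ext (comm _ _)
      simp only [Set.mem_insert_iff, Set.mem_singleton_iff] at hg hh
      rcases hg with rfl | rfl | rfl <;> rcases hh with rfl | rfl | rfl
      all_goals simp only [map_mul, map_inv, vstS, vstT, vstN, FreeGroup.lift_apply_of, hf,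
        Sum.elim_inl, Sum.elim_inr, mul_one, one_mul]
      all_goals try rw [mul_inv_eq_one]
      all_goals first
        | exact commSS
        | exact commSN
        | exact commNS
        | exact commNN
        | simp
  refine ⟨PresentedGroup.toGroup hrels, fun i => ?_⟩
  refine ⟨?_, ?_, ?_⟩ <;> rw [PresentedGroup.toGroup.of] <;> rfl
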